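/- Let P be a partial order on Y. Assume that for every μ ∈ Y and all t₁, t₂ ∈ T1(S) with t₁(μ) ≠ μ and t₂(μ) ≠ μ one has t₁(μ) − t₂(μ) ∈ DIS(μ,P,S). If furthermore P satisfies the topological descending chain condition and T(S) is equicontinuous and every element of T(S) is compatible with P, then Red(S) = M̄. -/

import Mathlib

open Set Filter Topology Pointwise

/-- The set of all finite compositions of elements of `T1`, including the identity. -/
def TS {M : Type*} [AddCommGroup M] (T1 : Set (AddMonoid.End M)) : Set (AddMonoid.End M) :=
  ↑(Submonoid.closure T1)

/-- Smallest topologically closed additive subgroup containing `Z` and stable under `R`. -/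
def Cspan {M : Type*} [AddCommGroup M] [TopologicalSpace M]
    (R : Set (AddMonoid.End M)) (Z : Set M) : Set M :=
  ⋂₀ {N : Set M | Z ⊆ N ∧ IsClosed N ∧ (∃ H : AddSubgroup M, N = ↑H) ∧
      ∀ r ∈ R, ∀ a ∈ N, r a ∈ N}

def IrrS {M : Type*} [AddCommGroup M] (T1 : Set (AddMonoid.End M)) : Set M :=
  {a | ∀ t ∈ TS T1, t a = a}

def IS {M : Type*} [AddCommGroup M] [TopologicalSpace M]
    (T1 : Set (AddMonoid.End M)) : Set M :=
  closure (AddSubgroup.closure {x : M | ∃ a : M, ∃ t ∈ TS T1, x = a - t a} : Set M)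

def Stuck {M : Type*} [AddCommGroup M] (T1 : Set (AddMonoid.End M)) (N : Set M) (a : M) :
    Prop :=
  ∀ t ∈ TS T1, t a ∈ N

def PerE {M : Type*} [AddCommGroup M] (T1 : Set (AddMonoid.End M)) (ε : Set M) : Set M :=
  {a | ∀ t1 ∈ TS T1, ∃ t2 ∈ TS T1, ∃ b ∈ IrrS T1,
    Stuck T1 {x | x - b ∈ ε} (t2 (t1 a))}

def Per {M : Type*} [AddCommGroup M] (T1 : Set (AddMonoid.End M))
    (B : ℕ → AddSubgroup M) : Set M :=
  ⋂ n, PerE T1 (B n)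

def UniqE {M : Type*} [AddCommGroup M] (T1 : Set (AddMonoid.End M)) (ε : Set M) : Set M :=
  {a | ∀ t1 ∈ TS T1, ∀ t2 ∈ TS T1, ∀ b1 ∈ IrrS T1, ∀ b2 ∈ IrrS T1,
    Stuck T1 {x | x - b1 ∈ ε} (t1 a) → Stuck T1 {x | x - b2 ∈ ε} (t2 a) → b1 - b2 ∈ ε}

def RedE {M : Type*} [AddCommGroup M] (T1 : Set (AddMonoid.End M))
    (B : ℕ → AddSubgroup M) (ε : Set M) : Set M :=
  Per T1 B ∩ UniqE T1 ε

def Red {M : Type*} [AddCommGroup M] (T1 : Set (AddMonoid.End M))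
    (B : ℕ → AddSubgroup M) : Set M :=
  ⋂ n, RedE T1 B (B n)

def Equicont {M : Type*} [AddCommGroup M] (T1 : Set (AddMonoid.End M))
    (B : ℕ → AddSubgroup M) : Prop :=
  ∀ n : ℕ, ∃ m : ℕ, ∀ t ∈ TS T1, ∀ a ∈ B m, t a ∈ B n

def DSM {M : Type*} [AddCommGroup M] [TopologicalSpace M]
    (R : Set (AddMonoid.End M)) (Y : Set M) (P : M → M → Prop) (μ : M) : Set M :=
  Cspan R {ν | ν ∈ Y ∧ P ν μ}

def Compatible {M : Type*} [AddCommGroup M] [TopologicalSpace M]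
    (R : Set (AddMonoid.End M)) (Y : Set M) (P : M → M → Prop)
    (t : AddMonoid.End M) : Prop :=
  ∀ μ ∈ Y, t μ = μ ∨ t μ ∈ DSM R Y P μ

def DIS {M : Type*} [AddCommGroup M] [TopologicalSpace M]
    (R : Set (AddMonoid.End M)) (Y : Set M) (P : M → M → Prop)
    (T1 : Set (AddMonoid.End M)) (μ : M) : Set M :=
  Cspan R {x | ∃ ν ∈ Y, P ν μ ∧ ∃ t ∈ T1, x = ν - t ν}

def TDCC {M : Type*} [AddCommGroup M] [TopologicalSpace M]
    (Y : Set M) (P : M → M → Prop) : Prop :=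
  ∀ μ : ℕ → M, (∀ n, μ n ∈ Y) → (∀ n, P (μ (n + 1)) (μ n)) →
    Filter.Tendsto μ Filter.atTop (nhds 0)


section UREHelpers

variable {M : Type*} [AddCommGroup M]

lemma ure_one_mem_TS (T1 : Set (AddMonoid.End M)) : (1 : AddMonoid.End M) ∈ TS T1 :=
  Submonoid.one_mem _

lemma ure_mul_mem_TS {T1 : Set (AddMonoid.End M)} {s t : AddMonoid.End M}
    (hs : s ∈ TS T1) (ht : t ∈ TS T1) : s * t ∈ TS T1 :=
  Submonoid.mul_mem _ hs ht

lemma ure_subset_TS {T1 : Set (AddMonoid.End M)} {t : AddMonoid.End M} (ht : t ∈ T1) :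
    t ∈ TS T1 := Submonoid.subset_closure ht

lemma ure_TS_comm {R T1 : Set (AddMonoid.End M)}
    (hT1comm : ∀ t ∈ T1, ∀ r ∈ R, ∀ a : M, t (r a) = r (t a))
    {t : AddMonoid.End M} (ht : t ∈ TS T1) {r : AddMonoid.End M} (hr : r ∈ R) (a : M) :
    t (r a) = r (t a) := by
  have ht' : t ∈ Submonoid.closure T1 := ht
  revert a
  induction ht' using Submonoid.closure_induction with
  | mem x hx => exact hT1comm x hx r hr
  | one => intro a; rfl
  | mul x y hx hy px py =>
    intro a
    show x (y (r a)) = r (x (y a))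
    rw [py hy a, px hx (y a)]

lemma ure_irr_zero {T1 : Set (AddMonoid.End M)} : (0 : M) ∈ IrrS T1 :=
  fun t _ => map_zero t

lemma ure_irr_add {T1 : Set (AddMonoid.End M)} {a b : M}
    (ha : a ∈ IrrS T1) (hb : b ∈ IrrS T1) : a + b ∈ IrrS T1 :=
  fun t ht => by rw [map_add, ha t ht, hb t ht]

lemma ure_irr_neg {T1 : Set (AddMonoid.End M)} {a : M} (ha : a ∈ IrrS T1) :
    -a ∈ IrrS T1 := fun t ht => by rw [map_neg, ha t ht]

lemma ure_irr_r {R T1 : Set (AddMonoid.End M)}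
    (hT1comm : ∀ t ∈ T1, ∀ r ∈ R, ∀ a : M, t (r a) = r (t a))
    {r : AddMonoid.End M} (hr : r ∈ R) {a : M} (ha : a ∈ IrrS T1) : r a ∈ IrrS T1 :=
  fun t ht => by rw [ure_TS_comm hT1comm ht hr a, ha t ht]

lemma ure_first_step (T1 : Set (AddMonoid.End M)) (μ : M)
    {t : AddMonoid.End M} (ht : t ∈ TS T1) :
    t μ = μ ∨ ∃ s ∈ T1, s μ ≠ μ ∧ ∃ t' ∈ TS T1, t μ = t' (s μ) := by
  have ht' : t ∈ Submonoid.closure T1 := ht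
  induction ht' using Submonoid.closure_induction with
  | mem x hx =>
    by_cases h : x μ = μ
    · exact Or.inl h
    · exact Or.inr ⟨x, hx, h, 1, ure_one_mem_TS T1, rfl⟩
  | one => exact Or.inl rfl
  | mul x y hx hy px py =>
    rcases py hy with h | ⟨s, hs, hsne, t', ht', he⟩
    · rcases px hx with h2 | ⟨s, hs, hsne, t', ht', he⟩
      · left; show x (y μ) = μ; rw [h, h2]
      · right; exact ⟨s, hs, hsne, t', ht', by show x (y μ) = _; rw [h, he]⟩
    · right
      refine ⟨s, hs, hsne, x * t', ure_mul_mem_TS hx ht', ?_⟩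
      show x (y μ) = x (t' (s μ))
      rw [he]

end UREHelpers

section URETopHelpers

variable {M : Type*} [AddCommGroup M] [UniformSpace M] [IsUniformAddGroup M]

lemma ure_cspan_subset (R : Set (AddMonoid.End M)) {Z N : Set M} (hZ : Z ⊆ N)
    (hcl : IsClosed N) (hgrp : ∃ H : AddSubgroup M, N = ↑H)
    (hR : ∀ r ∈ R, ∀ a ∈ N, r a ∈ N) : Cspan R Z ⊆ N :=
  Set.sInter_subset_of_mem ⟨hZ, hcl, hgrp, hR⟩

lemma ure_exists_subgroup (N : Set M) (h0 : (0:M) ∈ N)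
    (hadd : ∀ a ∈ N, ∀ b ∈ N, a + b ∈ N) (hneg : ∀ a ∈ N, -a ∈ N) :
    ∃ H : AddSubgroup M, N = ↑H :=
  ⟨{ carrier := N, zero_mem' := h0, add_mem' := fun ha hb => hadd _ ha _ hb,
     neg_mem' := fun ha => hneg _ ha }, rfl⟩

lemma ure_isClosed {B : ℕ → AddSubgroup M} (hBopen : ∀ n, IsOpen (B n : Set M))
    (S : Set M) (m : ℕ)
    (h : ∀ a ∈ closure S, (∃ s ∈ S, a - s ∈ B m) → a ∈ S) : IsClosed S := by
  refine isClosed_of_closure_subset fun a ha => h a ha ?_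
  obtain ⟨s, hs1, hs2⟩ := mem_closure_iff.mp ha {x | a - x ∈ B m}
    (IsOpen.preimage (continuous_const.sub continuous_id) (hBopen m)) (by simpa using (B m).zero_mem)
  exact ⟨s, hs2, hs1⟩

lemma ure_induction {B : ℕ → AddSubgroup M}
    (hBbasis : (nhds (0 : M)).HasBasis (fun _ : ℕ => True) (fun n => (B n : Set M)))
    {Y : Set M} {P : M → M → Prop} (hTDCC : TDCC Y P)
    (S : Set M) (m : ℕ) (hball : (B m : Set M) ⊆ S)
    (hind : ∀ μ ∈ Y, (∀ ν ∈ Y, P ν μ → ν ∈ S) → μ ∈ S) : Y ⊆ S := by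
  intro μ0 hμ0
  by_contra hns
  have key : ∀ a, a ∈ Y ∧ a ∉ S → ∃ ν, (ν ∈ Y ∧ ν ∉ S) ∧ P ν a := by
    rintro a ⟨ha, hna⟩
    by_contra h
    push_neg at h
    refine hna (hind a ha fun ν hν hP => ?_)
    by_contra hνS
    exact h ν ⟨hν, hνS⟩ hP
  classical
  let f : {a : M // a ∈ Y ∧ a ∉ S} → {a : M // a ∈ Y ∧ a ∉ S} :=
    fun x => ⟨(key x.1 x.2).choose, ((key x.1 x.2).choose_spec).1⟩
  have hf : ∀ x, P (f x).1 x.1 := fun x => ((key x.1 x.2).choose_spec).2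
  let x0 : {a : M // a ∈ Y ∧ a ∉ S} := ⟨μ0, hμ0, hns⟩
  let seq : ℕ → M := fun k => (f^[k] x0).1
  have hseq : ∀ k, seq (k + 1) = (f (f^[k] x0)).1 := by
    intro k
    show (f^[k+1] x0).1 = _
    rw [Function.iterate_succ_apply']
  have htend := hTDCC seq (fun k => (f^[k] x0).2.1)
    (fun k => by rw [hseq k]; exact hf _)
  obtain ⟨k, hk⟩ := (hBbasis.tendsto_right_iff.mp htend m trivial).exists
  exact (f^[k] x0).2.2 (hball hk)

end URETopHelpers


lemma ure_perE_univ
    {M : Type*} [AddCommGroup M] [UniformSpace M] [IsUniformAddGroup M]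
    (B : ℕ → AddSubgroup M)
    (hBopen : ∀ n, IsOpen (B n : Set M))
    (hBbasis : (nhds (0 : M)).HasBasis (fun _ : ℕ => True) (fun n => (B n : Set M)))
    (R : Set (AddMonoid.End M))
    (hRsmall : ∀ r ∈ R, ∀ n : ℕ, ∀ a ∈ B n, r a ∈ B n)
    (T1 : Set (AddMonoid.End M))
    (hT1comm : ∀ t ∈ T1, ∀ r ∈ R, ∀ a : M, t (r a) = r (t a))
    (Y : Set M) (hYspan : Cspan R Y = (Set.univ : Set M))
    (P : M → M → Prop)
    (hTDCC : TDCC Y P)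
    (hequi : Equicont T1 B)
    (hcompat : ∀ t ∈ TS T1, Compatible R Y P t)
    (n : ℕ) (a : M) : a ∈ PerE T1 (B n) := by
  obtain ⟨m, hm⟩ := hequi n
  set S : Set M := PerE T1 (B n) with hSdef
  have hmem : ∀ x : M, x ∈ S ↔ (∀ t1 ∈ TS T1, ∃ t2 ∈ TS T1, ∃ b ∈ IrrS T1,
      ∀ t ∈ TS T1, t (t2 (t1 x)) - b ∈ B n) := fun x => Iff.rfl
  have hS0 : (0 : M) ∈ S := by
    rw [hmem]
    intro t1 ht1
    refine ⟨1, ure_one_mem_TS T1, 0, ure_irr_zero, fun t ht => ?_⟩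
    have he : t ((1 : AddMonoid.End M) (t1 (0:M))) - 0 = 0 := by
      show t (t1 (0:M)) - 0 = 0
      rw [map_zero t1, map_zero t, sub_zero]
    rw [he]; exact (B n).zero_mem
  have hSadd : ∀ x ∈ S, ∀ y ∈ S, x + y ∈ S := by
    intro x hx y hy
    rw [hmem] at hx hy ⊢
    intro t1 ht1
    obtain ⟨t2, ht2, b, hb, hst⟩ := hx t1 ht1
    obtain ⟨t3, ht3, b', hb', hst'⟩ := hy (t2 * t1) (ure_mul_mem_TS ht2 ht1)
    refine ⟨t3 * t2, ure_mul_mem_TS ht3 ht2, b + b', ure_irr_add hb hb', fun t ht => ?_⟩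
    have h1 : (t * t3) (t2 (t1 x)) - b ∈ B n := hst (t * t3) (ure_mul_mem_TS ht ht3)
    have h2 : t (t3 ((t2 * t1) y)) - b' ∈ B n := hst' t ht
    have he : t ((t3 * t2) (t1 (x + y))) - (b + b') =
        ((t * t3) (t2 (t1 x)) - b) + (t (t3 ((t2 * t1) y)) - b') := by
      show t (t3 (t2 (t1 (x + y)))) - (b + b') =
        (t (t3 (t2 (t1 x))) - b) + (t (t3 (t2 (t1 y))) - b')
      rw [map_add t1, map_add t2, map_add t3, map_add t]
      abel
    rw [he]
    exact (B n).add_mem h1 h2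
  have hSneg : ∀ x ∈ S, -x ∈ S := by
    intro x hx
    rw [hmem] at hx ⊢
    intro t1 ht1
    obtain ⟨t2, ht2, b, hb, hst⟩ := hx t1 ht1
    refine ⟨t2, ht2, -b, ure_irr_neg hb, fun t ht => ?_⟩
    have h1 : t (t2 (t1 x)) - b ∈ B n := hst t ht
    have he : t (t2 (t1 (-x))) - (-b) = -(t (t2 (t1 x)) - b) := by
      rw [map_neg t1, map_neg t2, map_neg t]; abel
    rw [he]
    exact (B n).neg_mem h1
  have hScl : IsClosed S := by
    refine ure_isClosed hBopen S m fun x _ hx => ?_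
    obtain ⟨s, hsS, hss⟩ := hx
    rw [hmem] at hsS ⊢
    intro t1 ht1
    obtain ⟨t2, ht2, b, hb, hst⟩ := hsS t1 ht1
    refine ⟨t2, ht2, b, hb, fun t ht => ?_⟩
    have h1 : t (t2 (t1 s)) - b ∈ B n := hst t ht
    have h2 : t (t2 (t1 (x - s))) ∈ B n := by
      have := hm (t * (t2 * t1)) (ure_mul_mem_TS ht (ure_mul_mem_TS ht2 ht1)) _ hss
      exact this
    have he : t (t2 (t1 x)) - b = (t (t2 (t1 s)) - b) + t (t2 (t1 (x - s))) := by
      rw [map_sub t1, map_sub t2, map_sub t]; abel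
    rw [he]; exact (B n).add_mem h1 h2
  have hSR : ∀ r ∈ R, ∀ x ∈ S, r x ∈ S := by
    intro r hr x hx
    rw [hmem] at hx ⊢
    intro t1 ht1
    obtain ⟨t2, ht2, b, hb, hst⟩ := hx t1 ht1
    refine ⟨t2, ht2, r b, ure_irr_r hT1comm hr hb, fun t ht => ?_⟩
    have h1 : t (t2 (t1 x)) - b ∈ B n := hst t ht
    have h2 : r (t (t2 (t1 x)) - b) ∈ B n := hRsmall r hr n _ h1
    have he : t (t2 (t1 (r x))) - r b = r (t (t2 (t1 x)) - b) := by
      rw [ure_TS_comm hT1comm ht1 hr x, ure_TS_comm hT1comm ht2 hr (t1 x),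
        ure_TS_comm hT1comm ht hr (t2 (t1 x)), map_sub r]
    rw [he]; exact h2
  have hSgrp : ∃ H : AddSubgroup M, S = ↑H := ure_exists_subgroup S hS0 hSadd hSneg
  have hball : (B m : Set M) ⊆ S := by
    intro x hxm
    rw [hmem]
    intro t1 ht1
    refine ⟨1, ure_one_mem_TS T1, 0, ure_irr_zero, fun t ht => ?_⟩
    have h1 : (t * t1) x ∈ B n := hm (t * t1) (ure_mul_mem_TS ht ht1) x hxm
    have he : t ((1 : AddMonoid.End M) (t1 x)) - 0 = (t * t1) x := by
      show t (t1 x) - 0 = t (t1 x); rw [sub_zero]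
    rw [he]; exact h1
  have hYS : Y ⊆ S := by
    refine ure_induction hBbasis hTDCC S m hball ?_
    intro μ hμ ih
    have hD : DSM R Y P μ ⊆ S :=
      ure_cspan_subset R (fun ν hν => ih ν hν.1 hν.2) hScl hSgrp hSR
    rw [hmem]
    intro t1 ht1
    rcases hcompat t1 ht1 μ hμ with h | h
    · by_cases hir : ∀ t ∈ TS T1, t μ = μ
      · refine ⟨1, ure_one_mem_TS T1, μ, hir, fun t ht => ?_⟩
        have he : t ((1 : AddMonoid.End M) (t1 μ)) - μ = 0 := by
          show t (t1 μ) - μ = 0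
          rw [h, hir t ht, sub_self]
        rw [he]; exact (B n).zero_mem
      · push_neg at hir
        obtain ⟨u, hu, hune⟩ := hir
        have huD : u μ ∈ S := by
          rcases hcompat u hu μ hμ with h' | h'
          · exact absurd h' hune
          · exact hD h'
        rw [hmem] at huD
        obtain ⟨t2, ht2, b, hb, hst⟩ := huD 1 (ure_one_mem_TS T1)
        refine ⟨t2 * u, ure_mul_mem_TS ht2 hu, b, hb, fun t ht => ?_⟩
        have h1 : t (t2 ((1 : AddMonoid.End M) (u μ))) - b ∈ B n := hst t ht
        have he : t ((t2 * u) (t1 μ)) - b = t (t2 ((1 : AddMonoid.End M) (u μ))) - b := by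
          show t (t2 (u (t1 μ))) - b = t (t2 (u μ)) - b
          rw [h]
        rw [he]; exact h1
    · have h1 : t1 μ ∈ S := hD h
      rw [hmem] at h1
      obtain ⟨t2, ht2, b, hb, hst⟩ := h1 1 (ure_one_mem_TS T1)
      exact ⟨t2, ht2, b, hb, fun t ht => hst t ht⟩
  have hfin : Cspan R Y ⊆ S := ure_cspan_subset R hYS hScl hSgrp hSR
  rw [hYspan] at hfin
  exact hfin (Set.mem_univ a)


lemma ure_uniqE_univ
    {M : Type*} [AddCommGroup M] [UniformSpace M] [IsUniformAddGroup M]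
    (B : ℕ → AddSubgroup M)
    (hBopen : ∀ n, IsOpen (B n : Set M))
    (hBbasis : (nhds (0 : M)).HasBasis (fun _ : ℕ => True) (fun n => (B n : Set M)))
    (R : Set (AddMonoid.End M))
    (hRsmall : ∀ r ∈ R, ∀ n : ℕ, ∀ a ∈ B n, r a ∈ B n)
    (T1 : Set (AddMonoid.End M))
    (hT1comm : ∀ t ∈ T1, ∀ r ∈ R, ∀ a : M, t (r a) = r (t a))
    (Y : Set M) (hYspan : Cspan R Y = (Set.univ : Set M))
    (P : M → M → Prop)
    (hPtrans : ∀ μ ν ρ, P μ ν → P ν ρ → P μ ρ)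
    (hamb : ∀ μ ∈ Y, ∀ t1 ∈ T1, ∀ t2 ∈ T1, t1 μ ≠ μ → t2 μ ≠ μ →
      t1 μ - t2 μ ∈ DIS R Y P T1 μ)
    (hTDCC : TDCC Y P)
    (hequi : Equicont T1 B)
    (hcompat : ∀ t ∈ TS T1, Compatible R Y P t)
    (n : ℕ) (a : M) : a ∈ UniqE T1 (B n) := by
  obtain ⟨m, hm⟩ := hequi n
  have hper : ∀ x : M, ∀ t1 ∈ TS T1, ∃ t2 ∈ TS T1, ∃ b ∈ IrrS T1,
      ∀ t ∈ TS T1, t (t2 (t1 x)) - b ∈ B n :=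
    fun x => ure_perE_univ B hBopen hBbasis R hRsmall T1 hT1comm Y hYspan P hTDCC hequi
      hcompat n x
  set U : Set M := UniqE T1 (B n) with hUdef
  have hmem : ∀ x : M, x ∈ U ↔ (∀ t1 ∈ TS T1, ∀ t2 ∈ TS T1, ∀ b1 ∈ IrrS T1, ∀ b2 ∈ IrrS T1,
      (∀ t ∈ TS T1, t (t1 x) - b1 ∈ B n) → (∀ t ∈ TS T1, t (t2 x) - b2 ∈ B n) →
      b1 - b2 ∈ B n) := fun x => Iff.rfl
  have hU0 : (0 : M) ∈ U := by
    rw [hmem]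
    intro t1 ht1 t2 ht2 b1 hb1 b2 hb2 hs1 hs2
    have h1 : (1 : AddMonoid.End M) (t1 (0:M)) - b1 ∈ B n := hs1 1 (ure_one_mem_TS T1)
    have h2 : (1 : AddMonoid.End M) (t2 (0:M)) - b2 ∈ B n := hs2 1 (ure_one_mem_TS T1)
    have e1 : (1 : AddMonoid.End M) (t1 (0:M)) - b1 = -b1 := by
      show t1 (0:M) - b1 = -b1; rw [map_zero t1, zero_sub]
    have e2 : (1 : AddMonoid.End M) (t2 (0:M)) - b2 = -b2 := by
      show t2 (0:M) - b2 = -b2; rw [map_zero t2, zero_sub]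
    rw [e1] at h1; rw [e2] at h2
    have he : b1 - b2 = -(-b1) + (-b2) := by abel
    rw [he]; exact (B n).add_mem ((B n).neg_mem h1) h2
  have hUneg : ∀ x ∈ U, -x ∈ U := by
    intro x hx
    rw [hmem] at hx ⊢
    intro t1 ht1 t2 ht2 b1 hb1 b2 hb2 hs1 hs2
    have hs1' : ∀ t ∈ TS T1, t (t1 x) - (-b1) ∈ B n := by
      intro t ht
      have h1 := hs1 t ht
      have he : t (t1 x) - (-b1) = -(t (t1 (-x)) - b1) := by
        rw [map_neg t1, map_neg t]; abel
      rw [he]; exact (B n).neg_mem h1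
    have hs2' : ∀ t ∈ TS T1, t (t2 x) - (-b2) ∈ B n := by
      intro t ht
      have h2 := hs2 t ht
      have he : t (t2 x) - (-b2) = -(t (t2 (-x)) - b2) := by
        rw [map_neg t2, map_neg t]; abel
      rw [he]; exact (B n).neg_mem h2
    have h3 := hx t1 ht1 t2 ht2 (-b1) (ure_irr_neg hb1) (-b2) (ure_irr_neg hb2) hs1' hs2'
    have he : b1 - b2 = -(-b1 - -b2) := by abel
    rw [he]; exact (B n).neg_mem h3
  have hUadd : ∀ x ∈ U, ∀ y ∈ U, x + y ∈ U := by
    intro x hx y hy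
    rw [hmem] at hx hy ⊢
    intro t1 ht1 t2 ht2 c1 hc1 c2 hc2 hs1 hs2
    obtain ⟨u1, hu1, d1, hd1, hst1⟩ := hper x t1 ht1
    obtain ⟨u1', hu1', d1', hd1', hst1'⟩ := hper y (u1 * t1) (ure_mul_mem_TS hu1 ht1)
    obtain ⟨u2, hu2, d2, hd2, hst2⟩ := hper x t2 ht2
    obtain ⟨u2', hu2', d2', hd2', hst2'⟩ := hper y (u2 * t2) (ure_mul_mem_TS hu2 ht2)
    have e1 : c1 - (d1 + d1') ∈ B n := by
      have hA : (u1' * u1) (t1 (x + y)) - c1 ∈ B n :=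
        hs1 (u1' * u1) (ure_mul_mem_TS hu1' hu1)
      have hB : u1' (u1 (t1 x)) - d1 ∈ B n := hst1 u1' hu1'
      have hC : (1 : AddMonoid.End M) (u1' ((u1 * t1) y)) - d1' ∈ B n :=
        hst1' 1 (ure_one_mem_TS T1)
      have he : c1 - (d1 + d1') = -((u1' * u1) (t1 (x + y)) - c1) +
          ((u1' (u1 (t1 x)) - d1) + ((1 : AddMonoid.End M) (u1' ((u1 * t1) y)) - d1')) := by
        show c1 - (d1 + d1') = -(u1' (u1 (t1 (x + y))) - c1) +
          ((u1' (u1 (t1 x)) - d1) + (u1' (u1 (t1 y)) - d1'))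
        rw [map_add t1, map_add u1, map_add u1']
        abel
      rw [he]
      exact (B n).add_mem ((B n).neg_mem hA) ((B n).add_mem hB hC)
    have e2 : c2 - (d2 + d2') ∈ B n := by
      have hA : (u2' * u2) (t2 (x + y)) - c2 ∈ B n :=
        hs2 (u2' * u2) (ure_mul_mem_TS hu2' hu2)
      have hB : u2' (u2 (t2 x)) - d2 ∈ B n := hst2 u2' hu2'
      have hC : (1 : AddMonoid.End M) (u2' ((u2 * t2) y)) - d2' ∈ B n :=
        hst2' 1 (ure_one_mem_TS T1)
      have he : c2 - (d2 + d2') = -((u2' * u2) (t2 (x + y)) - c2) +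
          ((u2' (u2 (t2 x)) - d2) + ((1 : AddMonoid.End M) (u2' ((u2 * t2) y)) - d2')) := by
        show c2 - (d2 + d2') = -(u2' (u2 (t2 (x + y))) - c2) +
          ((u2' (u2 (t2 x)) - d2) + (u2' (u2 (t2 y)) - d2'))
        rw [map_add t2, map_add u2, map_add u2']
        abel
      rw [he]
      exact (B n).add_mem ((B n).neg_mem hA) ((B n).add_mem hB hC)
    have ed : d1 - d2 ∈ B n := by
      refine hx (u1 * t1) (ure_mul_mem_TS hu1 ht1) (u2 * t2) (ure_mul_mem_TS hu2 ht2)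
        d1 hd1 d2 hd2 ?_ ?_
      · intro t ht; exact hst1 t ht
      · intro t ht; exact hst2 t ht
    have ed' : d1' - d2' ∈ B n := by
      refine hy (u1' * (u1 * t1)) (ure_mul_mem_TS hu1' (ure_mul_mem_TS hu1 ht1))
        (u2' * (u2 * t2)) (ure_mul_mem_TS hu2' (ure_mul_mem_TS hu2 ht2))
        d1' hd1' d2' hd2' ?_ ?_
      · intro t ht; exact hst1' t ht
      · intro t ht; exact hst2' t ht
    have he : c1 - c2 = (c1 - (d1 + d1')) - (c2 - (d2 + d2')) + ((d1 - d2) + (d1' - d2')) := by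
      abel
    rw [he]
    exact (B n).add_mem ((B n).sub_mem e1 e2) ((B n).add_mem ed ed')
  have hUcl : IsClosed U := by
    refine ure_isClosed hBopen U m fun x _ hx => ?_
    obtain ⟨s, hsU, hss⟩ := hx
    rw [hmem] at hsU ⊢
    intro t1 ht1 t2 ht2 c1 hc1 c2 hc2 hs1 hs2
    refine hsU t1 ht1 t2 ht2 c1 hc1 c2 hc2 ?_ ?_
    · intro t ht
      have h2 : (t * t1) (x - s) ∈ B n := hm (t * t1) (ure_mul_mem_TS ht ht1) _ hss
      have he : t (t1 s) - c1 = (t (t1 x) - c1) - t (t1 (x - s)) := by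
        rw [map_sub t1, map_sub t]; abel
      rw [he]; exact (B n).sub_mem (hs1 t ht) h2
    · intro t ht
      have h2 : (t * t2) (x - s) ∈ B n := hm (t * t2) (ure_mul_mem_TS ht ht2) _ hss
      have he : t (t2 s) - c2 = (t (t2 x) - c2) - t (t2 (x - s)) := by
        rw [map_sub t2, map_sub t]; abel
      rw [he]; exact (B n).sub_mem (hs2 t ht) h2
  have hUR : ∀ r ∈ R, ∀ x ∈ U, r x ∈ U := by
    intro r hr x hx
    rw [hmem] at hx ⊢
    intro t1 ht1 t2 ht2 b1 hb1 b2 hb2 hs1 hs2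
    obtain ⟨u1, hu1, c1, hc1, hst1⟩ := hper x t1 ht1
    obtain ⟨u2, hu2, c2, hc2, hst2⟩ := hper x t2 ht2
    have hc12 : c1 - c2 ∈ B n :=
      hx (u1 * t1) (ure_mul_mem_TS hu1 ht1) (u2 * t2) (ure_mul_mem_TS hu2 ht2)
        c1 hc1 c2 hc2 (fun t ht => hst1 t ht) (fun t ht => hst2 t ht)
    have hb1' : b1 - r c1 ∈ B n := by
      have hA : u1 (t1 (r x)) - b1 ∈ B n := hs1 u1 hu1
      have hB : (1 : AddMonoid.End M) (u1 (t1 x)) - c1 ∈ B n := hst1 1 (ure_one_mem_TS T1)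
      have hrB : r (u1 (t1 x)) - r c1 ∈ B n := by
        have h3 : r ((1 : AddMonoid.End M) (u1 (t1 x)) - c1) ∈ B n := hRsmall r hr n _ hB
        have he : r (u1 (t1 x)) - r c1 = r ((1 : AddMonoid.End M) (u1 (t1 x)) - c1) := by
          show r (u1 (t1 x)) - r c1 = r (u1 (t1 x) - c1)
          rw [map_sub r]
        rw [he]; exact h3
      have he : b1 - r c1 = -(u1 (t1 (r x)) - b1) + (r (u1 (t1 x)) - r c1) := by
        rw [ure_TS_comm hT1comm ht1 hr x, ure_TS_comm hT1comm hu1 hr (t1 x)]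
        abel
      rw [he]; exact (B n).add_mem ((B n).neg_mem hA) hrB
    have hb2' : b2 - r c2 ∈ B n := by
      have hA : u2 (t2 (r x)) - b2 ∈ B n := hs2 u2 hu2
      have hB : (1 : AddMonoid.End M) (u2 (t2 x)) - c2 ∈ B n := hst2 1 (ure_one_mem_TS T1)
      have hrB : r (u2 (t2 x)) - r c2 ∈ B n := by
        have h3 : r ((1 : AddMonoid.End M) (u2 (t2 x)) - c2) ∈ B n := hRsmall r hr n _ hB
        have he : r (u2 (t2 x)) - r c2 = r ((1 : AddMonoid.End M) (u2 (t2 x)) - c2) := by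
          show r (u2 (t2 x)) - r c2 = r (u2 (t2 x) - c2)
          rw [map_sub r]
        rw [he]; exact h3
      have he : b2 - r c2 = -(u2 (t2 (r x)) - b2) + (r (u2 (t2 x)) - r c2) := by
        rw [ure_TS_comm hT1comm ht2 hr x, ure_TS_comm hT1comm hu2 hr (t2 x)]
        abel
      rw [he]; exact (B n).add_mem ((B n).neg_mem hA) hrB
    have hrc : r c1 - r c2 ∈ B n := by
      have h3 : r (c1 - c2) ∈ B n := hRsmall r hr n _ hc12
      have he : r c1 - r c2 = r (c1 - c2) := by rw [map_sub r]
      rw [he]; exact h3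
    have he : b1 - b2 = (b1 - r c1) - (b2 - r c2) + (r c1 - r c2) := by abel
    rw [he]; exact (B n).add_mem ((B n).sub_mem hb1' hb2') hrc
  have hUgrp : ∃ H : AddSubgroup M, U = ↑H := ure_exists_subgroup U hU0 hUadd hUneg
  have hball : (B m : Set M) ⊆ U := by
    intro x hxm
    rw [hmem]
    intro t1 ht1 t2 ht2 b1 hb1 b2 hb2 hs1 hs2
    have h1 : (1 : AddMonoid.End M) (t1 x) - b1 ∈ B n := hs1 1 (ure_one_mem_TS T1)
    have h1' : t1 x ∈ B n := hm t1 ht1 x hxm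
    have hb1n : b1 ∈ B n := by
      have he : b1 = t1 x - ((1 : AddMonoid.End M) (t1 x) - b1) := by
        show b1 = t1 x - (t1 x - b1); abel
      rw [he]; exact (B n).sub_mem h1' h1
    have h2 : (1 : AddMonoid.End M) (t2 x) - b2 ∈ B n := hs2 1 (ure_one_mem_TS T1)
    have h2' : t2 x ∈ B n := hm t2 ht2 x hxm
    have hb2n : b2 ∈ B n := by
      have he : b2 = t2 x - ((1 : AddMonoid.End M) (t2 x) - b2) := by
        show b2 = t2 x - (t2 x - b2); abel
      rw [he]; exact (B n).sub_mem h2' h2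
    exact (B n).sub_mem hb1n hb2n
  have hYU : Y ⊆ U := by
    refine ure_induction hBbasis hTDCC U m hball ?_
    intro μ hμ ih
    have hD : DSM R Y P μ ⊆ U :=
      ure_cspan_subset R (fun ν hν => ih ν hν.1 hν.2) hUcl hUgrp hUR
    have htν : ∀ ν ∈ Y, P ν μ → ∀ t ∈ TS T1, t ν ∈ U := by
      intro ν hν hPν t ht
      rcases hcompat t ht ν hν with h | h
      · rw [h]; exact ih ν hν hPν
      · exact ure_cspan_subset R
          (fun ρ hρ => ih ρ hρ.1 (hPtrans ρ ν μ hρ.2 hPν)) hUcl hUgrp hUR h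
    set Z : Set M := {d | (∃ t ∈ TS T1, ∀ t' ∈ TS T1, t' (t d) ∈ B n) ∧ d ∈ U} with hZdef
    have hZmem : ∀ d : M, d ∈ Z ↔
        (∃ t ∈ TS T1, ∀ t' ∈ TS T1, t' (t d) ∈ B n) ∧ d ∈ U := fun d => Iff.rfl
    have hZ0 : (0:M) ∈ Z := by
      refine (hZmem _).mpr ⟨⟨1, ure_one_mem_TS T1, fun t' ht' => ?_⟩, hU0⟩
      have he : t' ((1 : AddMonoid.End M) (0:M)) = 0 := by
        show t' (0:M) = 0; exact map_zero t'
      rw [he]; exact (B n).zero_mem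
    have hZred : ∀ d ∈ Z, ∀ t ∈ TS T1, ∃ t3 ∈ TS T1, ∀ t' ∈ TS T1,
        t' (t3 (t d)) ∈ B n := by
      intro d hd t ht
      obtain ⟨⟨tz, htz, hz⟩, hdU⟩ := (hZmem d).mp hd
      obtain ⟨t3, ht3, c, hc, hst⟩ := hper d t ht
      rw [hmem] at hdU
      have hc0 : c ∈ B n := by
        have h0 := hdU (t3 * t) (ure_mul_mem_TS ht3 ht) tz htz c hc 0 ure_irr_zero
          (fun t' ht' => hst t' ht')
          (fun t' ht' => by
            have he : t' (tz d) - 0 = t' (tz d) := sub_zero _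
            rw [he]; exact hz t' ht')
        have he : c = c - 0 := (sub_zero c).symm
        rw [he]; exact h0
      refine ⟨t3, ht3, fun t' ht' => ?_⟩
      have h1 : t' (t3 (t d)) - c ∈ B n := hst t' ht'
      have he : t' (t3 (t d)) = (t' (t3 (t d)) - c) + c := by abel
      rw [he]; exact (B n).add_mem h1 hc0
    have hZadd : ∀ d ∈ Z, ∀ d' ∈ Z, d + d' ∈ Z := by
      intro d hd d' hd'
      obtain ⟨⟨tz, htz, hz⟩, hdU⟩ := (hZmem d).mp hd
      obtain ⟨t3, ht3, h3⟩ := hZred d' hd' tz htz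
      refine (hZmem _).mpr ⟨⟨t3 * tz, ure_mul_mem_TS ht3 htz, fun t' ht' => ?_⟩,
        hUadd d hdU d' ((hZmem d').mp hd').2⟩
      have h1 : (t' * t3) (tz d) ∈ B n := hz (t' * t3) (ure_mul_mem_TS ht' ht3)
      have h2 : t' (t3 (tz d')) ∈ B n := h3 t' ht'
      have he : t' ((t3 * tz) (d + d')) = t' (t3 (tz d)) + t' (t3 (tz d')) := by
        show t' (t3 (tz (d + d'))) = _
        rw [map_add tz, map_add t3, map_add t']
      rw [he]; exact (B n).add_mem h1 h2
    have hZneg : ∀ d ∈ Z, -d ∈ Z := by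
      intro d hd
      obtain ⟨⟨tz, htz, hz⟩, hdU⟩ := (hZmem d).mp hd
      refine (hZmem _).mpr ⟨⟨tz, htz, fun t' ht' => ?_⟩, hUneg d hdU⟩
      have he : t' (tz (-d)) = -(t' (tz d)) := by rw [map_neg tz, map_neg t']
      rw [he]; exact (B n).neg_mem (hz t' ht')
    have hZgrp : ∃ H : AddSubgroup M, Z = ↑H := ure_exists_subgroup Z hZ0 hZadd hZneg
    have hZcl : IsClosed Z := by
      refine ure_isClosed hBopen Z m fun x hxcl hx => ?_
      obtain ⟨s, hsZ, hss⟩ := hx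
      obtain ⟨⟨tz, htz, hz⟩, hsU⟩ := (hZmem s).mp hsZ
      have hxU : x ∈ U := by
        have hsub : closure Z ⊆ U := by
          rw [← hUcl.closure_eq]
          exact closure_mono (fun d hd => ((hZmem d).mp hd).2)
        exact hsub hxcl
      refine (hZmem _).mpr ⟨⟨tz, htz, fun t' ht' => ?_⟩, hxU⟩
      have h1 : t' (tz s) ∈ B n := hz t' ht'
      have h2 : (t' * tz) (x - s) ∈ B n := hm (t' * tz) (ure_mul_mem_TS ht' htz) _ hss
      have he : t' (tz x) = t' (tz s) + t' (tz (x - s)) := by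
        rw [map_sub tz, map_sub t']; abel
      rw [he]; exact (B n).add_mem h1 h2
    have hZR : ∀ r ∈ R, ∀ d ∈ Z, r d ∈ Z := by
      intro r hr d hd
      obtain ⟨⟨tz, htz, hz⟩, hdU⟩ := (hZmem d).mp hd
      refine (hZmem _).mpr ⟨⟨tz, htz, fun t' ht' => ?_⟩, hUR r hr d hdU⟩
      have h1 : r (t' (tz d)) ∈ B n := hRsmall r hr n _ (hz t' ht')
      have he : t' (tz (r d)) = r (t' (tz d)) := by
        rw [ure_TS_comm hT1comm htz hr d, ure_TS_comm hT1comm ht' hr (tz d)]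
      rw [he]; exact h1
    have hDIS : DIS R Y P T1 μ ⊆ Z := by
      refine ure_cspan_subset R ?_ hZcl hZgrp hZR
      rintro x ⟨ν, hν, hPν, t, ht, rfl⟩
      have hνU : ν ∈ U := ih ν hν hPν
      have htνU : t ν ∈ U := htν ν hν hPν t (ure_subset_TS ht)
      have hxU : ν - t ν ∈ U := by
        have h4 := hUadd ν hνU (-(t ν)) (hUneg _ htνU)
        have he : ν - t ν = ν + -(t ν) := sub_eq_add_neg _ _
        rw [he]; exact h4
      by_cases hteq : t ν = ν
      · refine (hZmem _).mpr ⟨⟨1, ure_one_mem_TS T1, fun t' ht' => ?_⟩, hxU⟩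
        have he : t' ((1 : AddMonoid.End M) (ν - t ν)) = 0 := by
          show t' (ν - t ν) = 0
          rw [hteq, sub_self, map_zero t']
        rw [he]; exact (B n).zero_mem
      · obtain ⟨v1, hv1, c1, hc1, hst1⟩ := hper ν 1 (ure_one_mem_TS T1)
        obtain ⟨v2, hv2, c2, hc2, hst2⟩ := hper (t ν) v1 hv1
        have hνU' := hνU
        rw [hmem] at hνU'
        have hc12 : c1 - c2 ∈ B n := by
          refine hνU' v1 hv1 (v2 * (v1 * t))
            (ure_mul_mem_TS hv2 (ure_mul_mem_TS hv1 (ure_subset_TS ht)))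
            c1 hc1 c2 hc2 ?_ ?_
          · intro t' ht'; exact hst1 t' ht'
          · intro t' ht'; exact hst2 t' ht'
        refine (hZmem _).mpr ⟨⟨v2 * v1, ure_mul_mem_TS hv2 hv1, fun t' ht' => ?_⟩, hxU⟩
        have hA : (t' * v2) (v1 ((1 : AddMonoid.End M) ν)) - c1 ∈ B n :=
          hst1 (t' * v2) (ure_mul_mem_TS ht' hv2)
        have hB : t' (v2 (v1 (t ν))) - c2 ∈ B n := hst2 t' ht'
        have he : t' ((v2 * v1) (ν - t ν)) =
            (t' (v2 (v1 ν)) - c1) - (t' (v2 (v1 (t ν))) - c2) + (c1 - c2) := by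
          show t' (v2 (v1 (ν - t ν))) = _
          rw [map_sub v1, map_sub v2, map_sub t']
          abel
        rw [he]
        exact (B n).add_mem ((B n).sub_mem hA hB) hc12
    have hKey : ∀ s1 ∈ T1, s1 μ ≠ μ → ∀ s2 ∈ T1, s2 μ ≠ μ →
        ∀ u1 ∈ TS T1, ∀ c1 ∈ IrrS T1, (∀ t ∈ TS T1, t (u1 (s1 μ)) - c1 ∈ B n) →
        ∀ u2 ∈ TS T1, ∀ c2 ∈ IrrS T1, (∀ t ∈ TS T1, t (u2 (s2 μ)) - c2 ∈ B n) →
        c1 - c2 ∈ B n := by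
      intro s1 hs1m hne1 s2 hs2m hne2 u1 hu1 c1 hc1 hst1 u2 hu2 c2 hc2 hst2
      have hw : s1 μ - s2 μ ∈ Z := hDIS (hamb μ hμ s1 hs1m s2 hs2m hne1 hne2)
      obtain ⟨⟨tw, htw, hwst⟩, -⟩ := (hZmem _).mp hw
      have hs1U : s1 μ ∈ U := by
        rcases hcompat s1 (ure_subset_TS hs1m) μ hμ with h | h
        · exact absurd h hne1
        · exact hD h
      have hs2U : s2 μ ∈ U := by
        rcases hcompat s2 (ure_subset_TS hs2m) μ hμ with h | h
        · exact absurd h hne2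
        · exact hD h
      rw [hmem] at hs1U hs2U
      obtain ⟨v, hv, c, hc, hstc⟩ := hper (s1 μ) (u2 * tw) (ure_mul_mem_TS hu2 htw)
      have hcc1 : c - c1 ∈ B n :=
        hs1U (v * (u2 * tw)) (ure_mul_mem_TS hv (ure_mul_mem_TS hu2 htw)) u1 hu1
          c hc c1 hc1 (fun t' ht' => hstc t' ht') (fun t' ht' => hst1 t' ht')
      obtain ⟨v2, hv2, c', hc', hstc2⟩ := hper (s2 μ) (v * (u2 * tw))
        (ure_mul_mem_TS hv (ure_mul_mem_TS hu2 htw))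
      have hcc2 : c' - c2 ∈ B n :=
        hs2U (v2 * (v * (u2 * tw)))
          (ure_mul_mem_TS hv2 (ure_mul_mem_TS hv (ure_mul_mem_TS hu2 htw))) u2 hu2
          c' hc' c2 hc2 (fun t' ht' => hstc2 t' ht') (fun t' ht' => hst2 t' ht')
      have hccp : c - c' ∈ B n := by
        have hA : v2 (v ((u2 * tw) (s1 μ))) - c ∈ B n := hstc v2 hv2
        have hB : (1 : AddMonoid.End M) (v2 ((v * (u2 * tw)) (s2 μ))) - c' ∈ B n :=
          hstc2 1 (ure_one_mem_TS T1)
        have hw' : (v2 * (v * u2)) (tw (s1 μ - s2 μ)) ∈ B n :=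
          hwst (v2 * (v * u2)) (ure_mul_mem_TS hv2 (ure_mul_mem_TS hv hu2))
        have he : c - c' = -(v2 (v (u2 (tw (s1 μ)))) - c) + (v2 (v (u2 (tw (s2 μ)))) - c')
            + (v2 (v (u2 (tw (s1 μ)))) - v2 (v (u2 (tw (s2 μ))))) := by abel
        rw [he]
        refine (B n).add_mem ((B n).add_mem ((B n).neg_mem hA) hB) ?_
        have he2 : v2 (v (u2 (tw (s1 μ)))) - v2 (v (u2 (tw (s2 μ)))) =
            (v2 * (v * u2)) (tw (s1 μ - s2 μ)) := by
          show _ = v2 (v (u2 (tw (s1 μ - s2 μ))))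
          rw [map_sub tw, map_sub u2, map_sub v, map_sub v2]
        rw [he2]; exact hw'
      have he : c1 - c2 = -(c - c1) + (c - c') + (c' - c2) := by abel
      rw [he]
      exact (B n).add_mem ((B n).add_mem ((B n).neg_mem hcc1) hccp) hcc2
    rw [hmem]
    intro t1 ht1 t2 ht2 b1 hb1 b2 hb2 hs1 hs2
    rcases ure_first_step T1 μ ht1 with h1 | ⟨s1, hs1m, hne1, t1', ht1', he1⟩
    · rcases ure_first_step T1 μ ht2 with h2 | ⟨s2, hs2m, hne2, t2', ht2', he2⟩
      · have hA : (1 : AddMonoid.End M) (t1 μ) - b1 ∈ B n := hs1 1 (ure_one_mem_TS T1)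
        have hB : (1 : AddMonoid.End M) (t2 μ) - b2 ∈ B n := hs2 1 (ure_one_mem_TS T1)
        have hA' : μ - b1 ∈ B n := by
          have he : μ - b1 = (1 : AddMonoid.End M) (t1 μ) - b1 := by
            show μ - b1 = t1 μ - b1; rw [h1]
          rw [he]; exact hA
        have hB' : μ - b2 ∈ B n := by
          have he : μ - b2 = (1 : AddMonoid.End M) (t2 μ) - b2 := by
            show μ - b2 = t2 μ - b2; rw [h2]
          rw [he]; exact hB
        have he : b1 - b2 = (μ - b2) - (μ - b1) := by abel
        rw [he]; exact (B n).sub_mem hB' hA'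
      · have hs2U : s2 μ ∈ U := by
          rcases hcompat s2 (ure_subset_TS hs2m) μ hμ with h | h
          · exact absurd h hne2
          · exact hD h
        rw [hmem] at hs2U
        have hstb2 : ∀ t ∈ TS T1, t (t2' (s2 μ)) - b2 ∈ B n := by
          intro t ht
          have h3 := hs2 t ht
          rwa [he2] at h3
        have hstb1 : ∀ t ∈ TS T1, t (t2' (s2 μ)) - b1 ∈ B n := by
          intro t ht
          have h3 : (t * t2) (t1 μ) - b1 ∈ B n := hs1 (t * t2) (ure_mul_mem_TS ht ht2)
          have he : t (t2' (s2 μ)) - b1 = (t * t2) (t1 μ) - b1 := by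
            show t (t2' (s2 μ)) - b1 = t (t2 (t1 μ)) - b1
            rw [h1, he2]
          rw [he]; exact h3
        exact hs2U t2' ht2' t2' ht2' b1 hb1 b2 hb2 hstb1 hstb2
    · rcases ure_first_step T1 μ ht2 with h2 | ⟨s2, hs2m, hne2, t2', ht2', he2⟩
      · have hs1U : s1 μ ∈ U := by
          rcases hcompat s1 (ure_subset_TS hs1m) μ hμ with h | h
          · exact absurd h hne1
          · exact hD h
        rw [hmem] at hs1U
        have hstb1 : ∀ t ∈ TS T1, t (t1' (s1 μ)) - b1 ∈ B n := by
          intro t ht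
          have h3 := hs1 t ht
          rwa [he1] at h3
        have hstb2 : ∀ t ∈ TS T1, t (t1' (s1 μ)) - b2 ∈ B n := by
          intro t ht
          have h3 : (t * t1) (t2 μ) - b2 ∈ B n := hs2 (t * t1) (ure_mul_mem_TS ht ht1)
          have he : t (t1' (s1 μ)) - b2 = (t * t1) (t2 μ) - b2 := by
            show t (t1' (s1 μ)) - b2 = t (t1 (t2 μ)) - b2
            rw [h2, he1]
          rw [he]; exact h3
        exact hs1U t1' ht1' t1' ht1' b1 hb1 b2 hb2 hstb1 hstb2
      · have hs1U : s1 μ ∈ U := by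
          rcases hcompat s1 (ure_subset_TS hs1m) μ hμ with h | h
          · exact absurd h hne1
          · exact hD h
        have hs2U : s2 μ ∈ U := by
          rcases hcompat s2 (ure_subset_TS hs2m) μ hμ with h | h
          · exact absurd h hne2
          · exact hD h
        rw [hmem] at hs1U hs2U
        have hstb1 : ∀ t ∈ TS T1, t (t1' (s1 μ)) - b1 ∈ B n := by
          intro t ht
          have h3 := hs1 t ht
          rwa [he1] at h3
        have hstb2 : ∀ t ∈ TS T1, t (t2' (s2 μ)) - b2 ∈ B n := by
          intro t ht
          have h3 := hs2 t ht
          rwa [he2] at h3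
        obtain ⟨v1, hv1, c1, hc1, hstc1⟩ := hper (s1 μ) t1' ht1'
        obtain ⟨v2, hv2, c2, hc2, hstc2⟩ := hper (s2 μ) t2' ht2'
        have hb1c1 : b1 - c1 ∈ B n :=
          hs1U t1' ht1' (v1 * t1') (ure_mul_mem_TS hv1 ht1') b1 hb1 c1 hc1 hstb1
            (fun t ht => hstc1 t ht)
        have hb2c2 : b2 - c2 ∈ B n :=
          hs2U t2' ht2' (v2 * t2') (ure_mul_mem_TS hv2 ht2') b2 hb2 c2 hc2 hstb2
            (fun t ht => hstc2 t ht)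
        have hc1c2 : c1 - c2 ∈ B n :=
          hKey s1 hs1m hne1 s2 hs2m hne2 (v1 * t1') (ure_mul_mem_TS hv1 ht1') c1 hc1
            (fun t ht => hstc1 t ht) (v2 * t2') (ure_mul_mem_TS hv2 ht2') c2 hc2
            (fun t ht => hstc2 t ht)
        have he : b1 - b2 = (b1 - c1) - (b2 - c2) + (c1 - c2) := by abel
        rw [he]; exact (B n).add_mem ((B n).sub_mem hb1c1 hb2c2) hc1c2
  have hfin : Cspan R Y ⊆ U := ure_cspan_subset R hYU hUcl hUgrp hUR
  rw [hYspan] at hfin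
  exact hfin (Set.mem_univ a)


theorem uniquely_reducible_everywhere
    {M : Type*} [AddCommGroup M] [UniformSpace M] [IsUniformAddGroup M]
    [CompleteSpace M] [T2Space M]
    (B : ℕ → AddSubgroup M)
    (hBopen : ∀ n, IsOpen (B n : Set M))
    (hBanti : ∀ n, (B (n + 1) : Set M) ⊆ (B n : Set M))
    (hBbasis : (nhds (0 : M)).HasBasis (fun _ : ℕ => True) (fun n => (B n : Set M)))
    (hBsep : ⋂ n, (B n : Set M) = {0})
    (R : Set (AddMonoid.End M))
    (hRcont : ∀ r ∈ R, Continuous r)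
    (hRsmall : ∀ r ∈ R, ∀ n : ℕ, ∀ a ∈ B n, r a ∈ B n)
    (T1 : Set (AddMonoid.End M))
    (hT1cont : ∀ t ∈ T1, Continuous t)
    (hT1comm : ∀ t ∈ T1, ∀ r ∈ R, ∀ a : M, t (r a) = r (t a))
    (Y : Set M)
    (hYspan : Cspan R Y = (Set.univ : Set M))
    (P : M → M → Prop)
    (hPirr : ∀ μ, ¬ P μ μ)
    (hPtrans : ∀ μ ν ρ, P μ ν → P ν ρ → P μ ρ)
    (hamb : ∀ μ ∈ Y, ∀ t1 ∈ T1, ∀ t2 ∈ T1, t1 μ ≠ μ → t2 μ ≠ μ →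
      t1 μ - t2 μ ∈ DIS R Y P T1 μ)
    (hTDCC : TDCC Y P)
    (hequi : Equicont T1 B)
    (hcompat : ∀ t ∈ TS T1, Compatible R Y P t) :
    Red T1 B = Set.univ := by
  ext a
  simp only [Red, RedE, Per, Set.mem_iInter, Set.mem_inter_iff, Set.mem_univ, iff_true]
  intro n
  exact ⟨fun k => ure_perE_univ B hBopen hBbasis R hRsmall T1 hT1comm Y hYspan P hTDCC
      hequi hcompat k a,
    ure_uniqE_univ B hBopen hBbasis R hRsmall T1 hT1comm Y hYspan P hPtrans hamb hTDCC
      hequi hcompat n a⟩
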